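/- Under the stated assumptions, and assuming in addition that both block components W^{+−} : H₋⁻ → H₊⁺ and W^{−+} : H₋⁺ → H₊⁻ are compact, let G : Y → X be any Fredholm inverse of the Fredholm operator P|_{ker ϱ} : ker ϱ → Y (viewed as an operator into X via the inclusion ker ϱ ⊆ X). Then the difference G − Q : Y → X is a compact operator, where Q := (id_X − ϱ₋⁻¹ π₋⁺ ϱ₋) ∘ P₋⁻¹. -/

import Mathlib

set_option maxHeartbeats 1000000

/-- A bounded linear operator between Banach spaces is *Fredholm* if its kernel is
finite-dimensional and its range is closed and of finite codimension. -/
def IsFredholm {E F : Type*} [NormedAddCommGroup E] [NormedSpace ℂ E]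
    [NormedAddCommGroup F] [NormedSpace ℂ F] (T : E →L[ℂ] F) : Prop :=
  FiniteDimensional ℂ (LinearMap.ker (T : E →ₗ[ℂ] F)) ∧ IsClosed (LinearMap.range (T : E →ₗ[ℂ] F) : Set F) ∧
    FiniteDimensional ℂ (F ⧸ LinearMap.range (T : E →ₗ[ℂ] F))

/-- The index of a (Fredholm) operator: `dim ker T - codim ran T`. -/
noncomputable def fredholmIndex {E F : Type*} [NormedAddCommGroup E] [NormedSpace ℂ E]
    [NormedAddCommGroup F] [NormedSpace ℂ F] (T : E →L[ℂ] F) : ℤ :=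
  (Module.finrank ℂ (LinearMap.ker (T : E →ₗ[ℂ] F)) : ℤ) - (Module.finrank ℂ (F ⧸ LinearMap.range (T : E →ₗ[ℂ] F)) : ℤ)

/-- Two bounded operators *have equal index* if either both are Fredholm with the same
index, or neither is Fredholm. -/
def EqualIndex {E F E' F' : Type*} [NormedAddCommGroup E] [NormedSpace ℂ E]
    [NormedAddCommGroup F] [NormedSpace ℂ F] [NormedAddCommGroup E'] [NormedSpace ℂ E']
    [NormedAddCommGroup F'] [NormedSpace ℂ F'] (T : E →L[ℂ] F) (S : E' →L[ℂ] F') : Prop :=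
  (IsFredholm T ∧ IsFredholm S ∧ fredholmIndex T = fredholmIndex S) ∨
    (¬ IsFredholm T ∧ ¬ IsFredholm S)

/-- The block component `π ∘ W |_q : q → ran π` of a bounded operator `W : H₋ → H₊`. -/
noncomputable def blockComponent {Hm Hp : Type*}
    [NormedAddCommGroup Hm] [NormedSpace ℂ Hm] [NormedAddCommGroup Hp] [NormedSpace ℂ Hp]
    (π : Hp →L[ℂ] Hp) (W : Hm →L[ℂ] Hp) (q : Submodule ℂ Hm) :
    q →L[ℂ] LinearMap.range (π : Hp →ₗ[ℂ] Hp) :=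
  ContinuousLinearMap.codRestrict ((π.comp W).comp (Submodule.subtypeL q))
    (LinearMap.range (π : Hp →ₗ[ℂ] Hp)) (fun x => LinearMap.mem_range_self (π : Hp →ₗ[ℂ] Hp) (W x))

/-- The operator `W := ϱ₊ ∘ ϱ₋⁻¹ : H₋ → H₊`, where `ϱ₋⁻¹ : H₋ → ker P ⊆ X` is the inverse
of the isomorphism `rm = ϱ₋|_{ker P} : ker P ≃ H₋`. -/
noncomputable def Wop {X Y Hp Hm : Type*}
    [NormedAddCommGroup X] [NormedSpace ℂ X] [NormedAddCommGroup Y] [NormedSpace ℂ Y]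
    [NormedAddCommGroup Hp] [NormedSpace ℂ Hp] [NormedAddCommGroup Hm] [NormedSpace ℂ Hm]
    (P : X →L[ℂ] Y) (ϱp : X →L[ℂ] Hp) (rm : (LinearMap.ker (P : X →ₗ[ℂ] Y)) ≃L[ℂ] Hm) :
    Hm →L[ℂ] Hp :=
  (ϱp.comp (Submodule.subtypeL (LinearMap.ker (P : X →ₗ[ℂ] Y)))).comp
    (rm.symm : Hm →L[ℂ] LinearMap.ker (P : X →ₗ[ℂ] Y))

/-- The operator `ϱ := (π₋⁺ϱ₋) ⊕ (π₊⁻ϱ₊) : X → H₋⁺ ⊕ H₊⁻`. -/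
noncomputable def rhoOp {X Hp Hm : Type*}
    [NormedAddCommGroup X] [NormedSpace ℂ X]
    [NormedAddCommGroup Hp] [NormedSpace ℂ Hp] [NormedAddCommGroup Hm] [NormedSpace ℂ Hm]
    (ϱm : X →L[ℂ] Hm) (ϱp : X →L[ℂ] Hp) (πmp : Hm →L[ℂ] Hm) (πpm : Hp →L[ℂ] Hp) :
    X →L[ℂ] (LinearMap.range (πmp : Hm →ₗ[ℂ] Hm) × LinearMap.range (πpm : Hp →ₗ[ℂ] Hp)) :=
  (ContinuousLinearMap.codRestrict (πmp.comp ϱm) (LinearMap.range (πmp : Hm →ₗ[ℂ] Hm))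
      (fun x => LinearMap.mem_range_self (πmp : Hm →ₗ[ℂ] Hm) (ϱm x))).prod
    (ContinuousLinearMap.codRestrict (πpm.comp ϱp) (LinearMap.range (πpm : Hp →ₗ[ℂ] Hp))
      (fun x => LinearMap.mem_range_self (πpm : Hp →ₗ[ℂ] Hp) (ϱp x)))


/-- The operator `P₋⁻¹ := (ϱ₊ ⊕ P)⁻¹ ∘ (0 ⊕ id_Y) : Y → X`, where `ep` witnesses the
bounded invertibility of `ϱ₊ ⊕ P : X → H₊ ⊕ Y`. -/
noncomputable def Pminus {X Y Hp : Type*}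
    [NormedAddCommGroup X] [NormedSpace ℂ X] [NormedAddCommGroup Y] [NormedSpace ℂ Y]
    [NormedAddCommGroup Hp] [NormedSpace ℂ Hp]
    (ep : X ≃L[ℂ] Hp × Y) : Y →L[ℂ] X :=
  (ep.symm : Hp × Y →L[ℂ] X).comp ((0 : Y →L[ℂ] Hp).prod (ContinuousLinearMap.id ℂ Y))

/-- The operator `ϱ₋⁻¹ : H₋ → ker P ⊆ X`, viewed as a map into `X`. -/
noncomputable def rhoMinusInv {X Y Hm : Type*}
    [NormedAddCommGroup X] [NormedSpace ℂ X] [NormedAddCommGroup Y] [NormedSpace ℂ Y]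
    [NormedAddCommGroup Hm] [NormedSpace ℂ Hm]
    (P : X →L[ℂ] Y) (rm : (LinearMap.ker (P : X →ₗ[ℂ] Y)) ≃L[ℂ] Hm) : Hm →L[ℂ] X :=
  (Submodule.subtypeL (LinearMap.ker (P : X →ₗ[ℂ] Y))).comp (rm.symm : Hm →L[ℂ] LinearMap.ker (P : X →ₗ[ℂ] Y))

/-- The operator `Q := (id_X − ϱ₋⁻¹ π₋⁺ ϱ₋) ∘ P₋⁻¹ : Y → X`. -/
noncomputable def Qop {X Y Hp Hm : Type*}
    [NormedAddCommGroup X] [NormedSpace ℂ X] [NormedAddCommGroup Y] [NormedSpace ℂ Y]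
    [NormedAddCommGroup Hp] [NormedSpace ℂ Hp] [NormedAddCommGroup Hm] [NormedSpace ℂ Hm]
    (P : X →L[ℂ] Y) (ϱm : X →L[ℂ] Hm) (πmp : Hm →L[ℂ] Hm)
    (rm : (LinearMap.ker (P : X →ₗ[ℂ] Y)) ≃L[ℂ] Hm) (ep : X ≃L[ℂ] Hp × Y) : Y →L[ℂ] X :=
  (ContinuousLinearMap.id ℂ X - (rhoMinusInv P rm).comp (πmp.comp ϱm)).comp (Pminus ep)

/-- If both block components `W⁺⁻` and `W⁻⁺` are compact and `G : Y → X` is any Fredholm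
inverse of `P|_{ker ϱ} : ker ϱ → Y` (viewed as an operator into `X` via the inclusion
`ker ϱ ⊆ X`, i.e. `G = incl ∘ G₀` with `G₀ : Y → ker ϱ` a Fredholm inverse), then
`G − Q : Y → X` is compact, where `Q := (id_X − ϱ₋⁻¹ π₋⁺ ϱ₋) ∘ P₋⁻¹`. -/
theorem statement7
    {X Y Hp Hm : Type*}
    [NormedAddCommGroup X] [InnerProductSpace ℂ X] [CompleteSpace X]
    [NormedAddCommGroup Y] [NormedSpace ℂ Y] [CompleteSpace Y]
    [NormedAddCommGroup Hp] [NormedSpace ℂ Hp] [CompleteSpace Hp]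
    [NormedAddCommGroup Hm] [NormedSpace ℂ Hm] [CompleteSpace Hm]
    (πpp πpm : Hp →L[ℂ] Hp) (πmp πmm : Hm →L[ℂ] Hm)
    (hπpp : πpp.comp πpp = πpp) (hπpm : πpm.comp πpm = πpm)
    (hπp : πpp + πpm = ContinuousLinearMap.id ℂ Hp)
    (hπmp : πmp.comp πmp = πmp) (hπmm : πmm.comp πmm = πmm)
    (hπm : πmp + πmm = ContinuousLinearMap.id ℂ Hm)
    (P : X →L[ℂ] Y) (ϱp : X →L[ℂ] Hp) (ϱm : X →L[ℂ] Hm)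
    (ep : X ≃L[ℂ] Hp × Y) (hep : ∀ u : X, ep u = (ϱp u, P u))
    (em : X ≃L[ℂ] Hm × Y) (hem : ∀ u : X, em u = (ϱm u, P u))
    (rm : (LinearMap.ker (P : X →ₗ[ℂ] Y)) ≃L[ℂ] Hm)
    (hrm : ∀ u : LinearMap.ker (P : X →ₗ[ℂ] Y), rm u = ϱm u)
    (hcompactPM :
      IsCompactOperator ⇑(blockComponent πpp (Wop P ϱp rm) (LinearMap.range (πmm : Hm →ₗ[ℂ] Hm))))
    (hcompactMP :
      IsCompactOperator ⇑(blockComponent πpm (Wop P ϱp rm) (LinearMap.range (πmp : Hm →ₗ[ℂ] Hm))))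
    (G₀ : Y →L[ℂ] (LinearMap.ker (rhoOp ϱm ϱp πmp πpm :
        X →ₗ[ℂ] (LinearMap.range (πmp : Hm →ₗ[ℂ] Hm) × LinearMap.range (πpm : Hp →ₗ[ℂ] Hp)))))
    (hG₀r : IsCompactOperator
      ⇑((P.comp (Submodule.subtypeL (LinearMap.ker (rhoOp ϱm ϱp πmp πpm :
        X →ₗ[ℂ] (LinearMap.range (πmp : Hm →ₗ[ℂ] Hm) × LinearMap.range (πpm : Hp →ₗ[ℂ] Hp)))))).comp G₀ -
        ContinuousLinearMap.id ℂ Y))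
    (hG₀l : IsCompactOperator
      ⇑(G₀.comp (P.comp (Submodule.subtypeL (LinearMap.ker (rhoOp ϱm ϱp πmp πpm :
        X →ₗ[ℂ] (LinearMap.range (πmp : Hm →ₗ[ℂ] Hm) × LinearMap.range (πpm : Hp →ₗ[ℂ] Hp)))))) -
        ContinuousLinearMap.id ℂ (LinearMap.ker (rhoOp ϱm ϱp πmp πpm :
        X →ₗ[ℂ] (LinearMap.range (πmp : Hm →ₗ[ℂ] Hm) × LinearMap.range (πpm : Hp →ₗ[ℂ] Hp)))))) :
    IsCompactOperator
      ⇑((Submodule.subtypeL (LinearMap.ker (rhoOp ϱm ϱp πmp πpm :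
        X →ₗ[ℂ] (LinearMap.range (πmp : Hm →ₗ[ℂ] Hm) × LinearMap.range (πpm : Hp →ₗ[ℂ] Hp))))).comp G₀ -
        Qop P ϱm πmp rm ep) := by
  classical
  set Q := Qop P ϱm πmp rm ep with hQdef
  set Pm := Pminus ep with hPmdef
  set Rm := rhoMinusInv P rm with hRmdef
  set W := Wop P ϱp rm with hWdef
  -- basic componentwise facts
  have hπmp' : ∀ a : Hm, πmp (πmp a) = πmp a := fun a => by
    simpa using DFunLike.congr_fun hπmp a
  have hπmdec : ∀ a : Hm, πmp a + πmm a = a := fun a => by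
    simpa using DFunLike.congr_fun hπm a
  have hπpdec : ∀ a : Hp, πpp a + πpm a = a := fun a => by
    simpa using DFunLike.congr_fun hπp a
  have hepPm : ∀ f : Y, ep (Pm f) = (0, f) := by
    intro f
    have : Pm f = ep.symm (0, f) := by
      simp [hPmdef, Pminus]
    rw [this, ep.apply_symm_apply]
  have hPmP : ∀ f : Y, P (Pm f) = f := by
    intro f
    have h2 := hep (Pm f)
    rw [hepPm f] at h2
    exact ((Prod.ext_iff.mp h2).2).symm
  have hPmϱ : ∀ f : Y, ϱp (Pm f) = 0 := by
    intro f
    have h2 := hep (Pm f)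
    rw [hepPm f] at h2
    exact ((Prod.ext_iff.mp h2).1).symm
  have hRmP : ∀ h : Hm, P (Rm h) = 0 := by
    intro h
    simpa [hRmdef, rhoMinusInv] using (rm.symm h).2
  have hRmm : ∀ h : Hm, ϱm (Rm h) = h := by
    intro h
    have := hrm (rm.symm h)
    rw [rm.apply_symm_apply] at this
    simpa [hRmdef, rhoMinusInv] using this.symm
  have hWrm : ∀ h : Hm, ϱp (Rm h) = W h := by
    intro h
    rw [hRmdef, hWdef]
    simp only [rhoMinusInv, Wop, ContinuousLinearMap.comp_apply,
      ContinuousLinearEquiv.coe_coe, Submodule.subtypeL_apply]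
  have hkerW : ∀ z : X, P z = 0 → ϱp z = W (ϱm z) := by
    intro z hz
    have hk : z ∈ LinearMap.ker (P : X →ₗ[ℂ] Y) := LinearMap.mem_ker.mpr hz
    have h1 : ϱm z = rm ⟨z, hk⟩ := (hrm ⟨z, hk⟩).symm
    have h2 : Rm (rm ⟨z, hk⟩) = z := by
      rw [hRmdef]
      simp only [rhoMinusInv, ContinuousLinearMap.comp_apply,
        ContinuousLinearEquiv.coe_coe, Submodule.subtypeL_apply,
        ContinuousLinearEquiv.symm_apply_apply]
    rw [h1, ← hWrm, h2]
  have hQapp : ∀ f : Y, Q f = Pm f - Rm (πmp (ϱm (Pm f))) := by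
    intro f
    simp [hQdef, Qop, hRmdef, hPmdef]
  have hPQ : ∀ f : Y, P (Q f) = f := by
    intro f
    rw [hQapp, map_sub, hPmP, hRmP, sub_zero]
  -- membership facts for elements of (LinearMap.ker (rhoOp ϱm ϱp πmp πpm : X →ₗ[ℂ] (LinearMap.range (πmp : Hm →ₗ[ℂ] Hm) × LinearMap.range (πpm : Hp →ₗ[ℂ] Hp))))
  have hx1 : ∀ x : (LinearMap.ker (rhoOp ϱm ϱp πmp πpm : X →ₗ[ℂ] (LinearMap.range (πmp : Hm →ₗ[ℂ] Hm) × LinearMap.range (πpm : Hp →ₗ[ℂ] Hp)))), πmp (ϱm (x : X)) = 0 := by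
    intro x
    have hx0 : rhoOp ϱm ϱp πmp πpm (x : X) = 0 := LinearMap.mem_ker.mp x.2
    calc πmp (ϱm (x : X)) = ((rhoOp ϱm ϱp πmp πpm (x : X)).1 : Hm) := rfl
      _ = (((0 : (LinearMap.range (πmp : Hm →ₗ[ℂ] Hm)) × (LinearMap.range (πpm : Hp →ₗ[ℂ] Hp)))).1 : Hm) := by
          rw [hx0]
      _ = 0 := rfl
  have hx2 : ∀ x : (LinearMap.ker (rhoOp ϱm ϱp πmp πpm : X →ₗ[ℂ] (LinearMap.range (πmp : Hm →ₗ[ℂ] Hm) × LinearMap.range (πpm : Hp →ₗ[ℂ] Hp)))), πpm (ϱp (x : X)) = 0 := by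
    intro x
    have hx0 : rhoOp ϱm ϱp πmp πpm (x : X) = 0 := LinearMap.mem_ker.mp x.2
    calc πpm (ϱp (x : X)) = ((rhoOp ϱm ϱp πmp πpm (x : X)).2 : Hp) := rfl
      _ = (((0 : (LinearMap.range (πmp : Hm →ₗ[ℂ] Hm)) × (LinearMap.range (πpm : Hp →ₗ[ℂ] Hp)))).2 : Hp) := by
          rw [hx0]
      _ = 0 := rfl
  -- the operator D = (id - Q P) ∘ (Submodule.subtypeL (LinearMap.ker (rhoOp ϱm ϱp πmp πpm : X →ₗ[ℂ] (LinearMap.range (πmp : Hm →ₗ[ℂ] Hm) × LinearMap.range (πpm : Hp →ₗ[ℂ] Hp)))))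
  set D := (ContinuousLinearMap.id ℂ X - Q.comp P).comp (Submodule.subtypeL (LinearMap.ker (rhoOp ϱm ϱp πmp πpm : X →ₗ[ℂ] (LinearMap.range (πmp : Hm →ₗ[ℂ] Hm) × LinearMap.range (πpm : Hp →ₗ[ℂ] Hp))))) with hDdef
  have hDapp : ∀ x : (LinearMap.ker (rhoOp ϱm ϱp πmp πpm : X →ₗ[ℂ] (LinearMap.range (πmp : Hm →ₗ[ℂ] Hm) × LinearMap.range (πpm : Hp →ₗ[ℂ] Hp)))), D x = (x : X) - Q (P (x : X)) := by
    intro x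
    simp [hDdef]
  have hz : ∀ x : (LinearMap.ker (rhoOp ϱm ϱp πmp πpm : X →ₗ[ℂ] (LinearMap.range (πmp : Hm →ₗ[ℂ] Hm) × LinearMap.range (πpm : Hp →ₗ[ℂ] Hp)))),
      D x = (x : X) - Pm (P (x : X)) + Rm (πmp (ϱm (Pm (P (x : X))))) := by
    intro x
    rw [hDapp, hQapp]
    abel
  have hPz : ∀ x : (LinearMap.ker (rhoOp ϱm ϱp πmp πpm : X →ₗ[ℂ] (LinearMap.range (πmp : Hm →ₗ[ℂ] Hm) × LinearMap.range (πpm : Hp →ₗ[ℂ] Hp)))), P (D x) = 0 := by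
    intro x
    rw [hDapp, map_sub, hPQ, sub_self]
  have hϱmz : ∀ x : (LinearMap.ker (rhoOp ϱm ϱp πmp πpm : X →ₗ[ℂ] (LinearMap.range (πmp : Hm →ₗ[ℂ] Hm) × LinearMap.range (πpm : Hp →ₗ[ℂ] Hp)))), πmp (ϱm (D x)) = 0 := by
    intro x
    rw [hz, map_add, map_sub, map_add, map_sub, hRmm, hπmp', hx1]
    abel
  have hmemz : ∀ x : (LinearMap.ker (rhoOp ϱm ϱp πmp πpm : X →ₗ[ℂ] (LinearMap.range (πmp : Hm →ₗ[ℂ] Hm) × LinearMap.range (πpm : Hp →ₗ[ℂ] Hp)))), ϱm (D x) ∈ LinearMap.range (πmm : Hm →ₗ[ℂ] Hm) := by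
    intro x
    refine ⟨ϱm (D x), ?_⟩
    have := hπmdec (ϱm (D x))
    rw [hϱmz x, zero_add] at this
    exact this
  -- the two block maps
  set H : (LinearMap.ker (rhoOp ϱm ϱp πmp πpm : X →ₗ[ℂ] (LinearMap.range (πmp : Hm →ₗ[ℂ] Hm) × LinearMap.range (πpm : Hp →ₗ[ℂ] Hp)))) →L[ℂ] (LinearMap.range (πmm : Hm →ₗ[ℂ] Hm)) :=
    ContinuousLinearMap.codRestrict (ϱm.comp D) (LinearMap.range (πmm : Hm →ₗ[ℂ] Hm))
      (fun x => by simpa using hmemz x) with hHdef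
  set M : (LinearMap.ker (rhoOp ϱm ϱp πmp πpm : X →ₗ[ℂ] (LinearMap.range (πmp : Hm →ₗ[ℂ] Hm) × LinearMap.range (πpm : Hp →ₗ[ℂ] Hp)))) →L[ℂ] (LinearMap.range (πmp : Hm →ₗ[ℂ] Hm)) :=
    ContinuousLinearMap.codRestrict ((πmp.comp ϱm).comp (Pm.comp (P.comp (Submodule.subtypeL (LinearMap.ker (rhoOp ϱm ϱp πmp πpm : X →ₗ[ℂ] (LinearMap.range (πmp : Hm →ₗ[ℂ] Hm) × LinearMap.range (πpm : Hp →ₗ[ℂ] Hp))))))))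
      (LinearMap.range (πmp : Hm →ₗ[ℂ] Hm))
      (fun x => LinearMap.mem_range_self (πmp : Hm →ₗ[ℂ] Hm) _) with hMdef
  have hϱpz : ∀ x : (LinearMap.ker (rhoOp ϱm ϱp πmp πpm : X →ₗ[ℂ] (LinearMap.range (πmp : Hm →ₗ[ℂ] Hm) × LinearMap.range (πpm : Hp →ₗ[ℂ] Hp)))),
      ϱp (D x) = πpp (W (ϱm (D x))) + πpm (W (πmp (ϱm (Pm (P (x : X)))))) := by
    intro x
    have h1 : ϱp (D x) = W (ϱm (D x)) := hkerW _ (hPz x)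
    have h2 : πpm (ϱp (D x)) = πpm (W (πmp (ϱm (Pm (P (x : X)))))) := by
      have h3 : ϱp (D x) = ϱp (x : X) - ϱp (Pm (P (x : X)))
          + ϱp (Rm (πmp (ϱm (Pm (P (x : X)))))) := by
        rw [hz]; rw [map_add, map_sub]
      rw [h3, hPmϱ, hWrm, sub_zero, map_add, hx2, zero_add]
    calc ϱp (D x) = πpp (ϱp (D x)) + πpm (ϱp (D x)) := (hπpdec _).symm
      _ = πpp (W (ϱm (D x))) + πpm (W (πmp (ϱm (Pm (P (x : X)))))) := by
          rw [h2, h1]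
  -- factor D through the compact block components
  set Φ₁ : (LinearMap.ker (rhoOp ϱm ϱp πmp πpm : X →ₗ[ℂ] (LinearMap.range (πmp : Hm →ₗ[ℂ] Hm) × LinearMap.range (πpm : Hp →ₗ[ℂ] Hp)))) →L[ℂ] Hp :=
    (Submodule.subtypeL (LinearMap.range (πpp : Hp →ₗ[ℂ] Hp))).comp
      ((blockComponent πpp W (LinearMap.range (πmm : Hm →ₗ[ℂ] Hm))).comp H) with hΦ₁def
  set Φ₂ : (LinearMap.ker (rhoOp ϱm ϱp πmp πpm : X →ₗ[ℂ] (LinearMap.range (πmp : Hm →ₗ[ℂ] Hm) × LinearMap.range (πpm : Hp →ₗ[ℂ] Hp)))) →L[ℂ] Hp :=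
    (Submodule.subtypeL (LinearMap.range (πpm : Hp →ₗ[ℂ] Hp))).comp
      ((blockComponent πpm W (LinearMap.range (πmp : Hm →ₗ[ℂ] Hm))).comp M) with hΦ₂def
  set Acl : Hp →L[ℂ] X :=
    (ep.symm : Hp × Y →L[ℂ] X).comp (ContinuousLinearMap.inl ℂ Hp Y) with hAcldef
  have hΦ₁app : ∀ x : (LinearMap.ker (rhoOp ϱm ϱp πmp πpm : X →ₗ[ℂ] (LinearMap.range (πmp : Hm →ₗ[ℂ] Hm) × LinearMap.range (πpm : Hp →ₗ[ℂ] Hp)))), Φ₁ x = πpp (W (ϱm (D x))) := by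
    intro x
    simp [hΦ₁def, blockComponent, hHdef]
    rfl
  have hΦ₂app : ∀ x : (LinearMap.ker (rhoOp ϱm ϱp πmp πpm : X →ₗ[ℂ] (LinearMap.range (πmp : Hm →ₗ[ℂ] Hm) × LinearMap.range (πpm : Hp →ₗ[ℂ] Hp)))), Φ₂ x = πpm (W (πmp (ϱm (Pm (P (x : X)))))) := by
    intro x
    simp [hΦ₂def, blockComponent, hMdef]
    rfl
  have hDfun : ⇑D = ⇑Acl ∘ ⇑(Φ₁ + Φ₂) := by
    funext x
    show D x = Acl ((Φ₁ + Φ₂) x)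
    have hepD : ep (D x) = (ϱp (D x), 0) := by
      rw [hep (D x), hPz x]
    have : D x = ep.symm (ϱp (D x), 0) := by
      rw [← hepD, ep.symm_apply_apply]
    rw [this]
    have : Acl ((Φ₁ + Φ₂) x) = ep.symm (Φ₁ x + Φ₂ x, 0) := by
      simp [hAcldef]
    rw [this, hΦ₁app, hΦ₂app, hϱpz]
  -- compactness of D
  have hΦ₁c : IsCompactOperator ⇑Φ₁ := by
    have : ⇑Φ₁ = (⇑(Submodule.subtypeL (LinearMap.range (πpp : Hp →ₗ[ℂ] Hp))) ∘
        ⇑(blockComponent πpp W (LinearMap.range (πmm : Hm →ₗ[ℂ] Hm)))) ∘ ⇑H := by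
      funext x; simp [hΦ₁def]
    rw [this]
    exact (hcompactPM.clm_comp _).comp_clm H
  have hΦ₂c : IsCompactOperator ⇑Φ₂ := by
    have : ⇑Φ₂ = (⇑(Submodule.subtypeL (LinearMap.range (πpm : Hp →ₗ[ℂ] Hp))) ∘
        ⇑(blockComponent πpm W (LinearMap.range (πmp : Hm →ₗ[ℂ] Hm)))) ∘ ⇑M := by
      funext x; simp [hΦ₂def]
    rw [this]
    exact (hcompactMP.clm_comp _).comp_clm M
  have hDc : IsCompactOperator ⇑D := by
    rw [hDfun]
    have hsum : IsCompactOperator ⇑(Φ₁ + Φ₂) := by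
      have : ⇑(Φ₁ + Φ₂) = ⇑Φ₁ + ⇑Φ₂ := by
        funext x; simp
      rw [this]
      exact hΦ₁c.add hΦ₂c
    exact hsum.clm_comp Acl
  -- assemble
  have key : ⇑((Submodule.subtypeL (LinearMap.ker (rhoOp ϱm ϱp πmp πpm : X →ₗ[ℂ] (LinearMap.range (πmp : Hm →ₗ[ℂ] Hm) × LinearMap.range (πpm : Hp →ₗ[ℂ] Hp))))).comp G₀ - Q) = ⇑(D.comp G₀) +
      ⇑(Q.comp ((P.comp (Submodule.subtypeL (LinearMap.ker (rhoOp ϱm ϱp πmp πpm : X →ₗ[ℂ] (LinearMap.range (πmp : Hm →ₗ[ℂ] Hm) × LinearMap.range (πpm : Hp →ₗ[ℂ] Hp)))))).comp G₀ - ContinuousLinearMap.id ℂ Y)) := by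
    funext f
    simp only [ContinuousLinearMap.sub_apply, ContinuousLinearMap.comp_apply,
      ContinuousLinearMap.id_apply, Pi.add_apply, hDdef, map_sub]
    abel
  show IsCompactOperator ⇑((Submodule.subtypeL (LinearMap.ker (rhoOp ϱm ϱp πmp πpm : X →ₗ[ℂ] (LinearMap.range (πmp : Hm →ₗ[ℂ] Hm) × LinearMap.range (πpm : Hp →ₗ[ℂ] Hp))))).comp G₀ - Q)
  rw [key]
  refine IsCompactOperator.add ?_ ?_
  · have : ⇑(D.comp G₀) = ⇑D ∘ ⇑G₀ := by funext f; simp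
    rw [this]
    exact hDc.comp_clm G₀
  · have : ⇑(Q.comp ((P.comp (Submodule.subtypeL (LinearMap.ker (rhoOp ϱm ϱp πmp πpm : X →ₗ[ℂ] (LinearMap.range (πmp : Hm →ₗ[ℂ] Hm) × LinearMap.range (πpm : Hp →ₗ[ℂ] Hp)))))).comp G₀ - ContinuousLinearMap.id ℂ Y)) =
        ⇑Q ∘ ⇑((P.comp (Submodule.subtypeL (LinearMap.ker (rhoOp ϱm ϱp πmp πpm : X →ₗ[ℂ] (LinearMap.range (πmp : Hm →ₗ[ℂ] Hm) × LinearMap.range (πpm : Hp →ₗ[ℂ] Hp)))))).comp G₀ - ContinuousLinearMap.id ℂ Y) := by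
      funext f; simp
    rw [this]
    exact (hG₀r.clm_comp Q)
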